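/- For any smooth, rapidly decaying vector field $u$ on $\mathbb{R}^3$, $\|\nabla u\|_{L^3(\mathbb{R}^3)}^3 \le C\, \|\nabla u\|_{L^2}^{3/2}\, \|\nabla^2 u\|_{L^2}\, \|\nabla \partial_3 u\|_{L^2}^{1/2}$ for an absolute constant $C$. -/

import Mathlib

open MeasureTheory NNReal
open MeasureTheory Filter Set
open scoped ENNReal NNReal

lemma oneDim {g g' : ℝ → ℝ} (hd : ∀ t, HasDerivAt g (g' t) t) (hc : Continuous g')
    (h0 : Tendsto g atBot (nhds 0)) (b : ℝ) :
    (‖g b‖₊ : ℝ≥0∞) ≤ ∫⁻ t, ‖g' t‖₊ := by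
  by_cases hfin : (∫⁻ t in Iic b, ‖g' t‖₊) = ∞
  · have h2 : (∫⁻ t, (‖g' t‖₊ : ℝ≥0∞)) = ⊤ :=
      eq_top_iff.2 (hfin ▸ (lintegral_mono' (μ := volume.restrict (Iic b)) Measure.restrict_le_self le_rfl))
    rw [h2]; exact le_top
  have hint : IntegrableOn g' (Iic b) := by
    refine ⟨hc.aestronglyMeasurable.restrict, ?_⟩
    rw [HasFiniteIntegral]
    exact lt_top_iff_ne_top.2 hfin
  have key : ∫ t in Iic b, g' t = g b - 0 :=
    integral_Iic_of_hasDerivAt_of_tendsto' (fun x _ => hd x) hint h0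
  rw [sub_zero] at key
  calc (‖g b‖₊ : ℝ≥0∞) = ENNReal.ofReal ‖∫ t in Iic b, g' t‖ := by
        rw [key, ofReal_norm_eq_enorm, enorm_eq_nnnorm]
    _ ≤ ENNReal.ofReal (∫ t in Iic b, ‖g' t‖) :=
        ENNReal.ofReal_le_ofReal (norm_integral_le_integral_norm _)
    _ = ∫⁻ t in Iic b, ‖g' t‖₊ := ofReal_integral_norm_eq_lintegral_enorm hint
    _ ≤ ∫⁻ t, ‖g' t‖₊ := lintegral_mono' Measure.restrict_le_self le_rfl


lemma cs {α : Type*} [MeasurableSpace α] (μ : Measure α) {f g : α → ℝ≥0∞}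
    (hf : Measurable f) (hg : Measurable g) :
    ∫⁻ t, (f t * g t) ^ ((1:ℝ)/2) ∂μ ≤ ((∫⁻ t, f t ∂μ) * (∫⁻ t, g t ∂μ)) ^ ((1:ℝ)/2) := by
  have h2 : Real.HolderConjugate 2 2 := ⟨by norm_num, by norm_num, by norm_num⟩
  calc ∫⁻ t, (f t * g t) ^ ((1:ℝ)/2) ∂μ
      = ∫⁻ t, ((fun t => f t ^ ((1:ℝ)/2)) * fun t => g t ^ ((1:ℝ)/2)) t ∂μ := by
        simp_rw [Pi.mul_apply, ← ENNReal.mul_rpow_of_nonneg _ _ (by norm_num : (0:ℝ) ≤ 1/2)]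
    _ ≤ (∫⁻ t, (f t ^ ((1:ℝ)/2)) ^ (2:ℝ) ∂μ) ^ (1/(2:ℝ)) *
        (∫⁻ t, (g t ^ ((1:ℝ)/2)) ^ (2:ℝ) ∂μ) ^ (1/(2:ℝ)) :=
        ENNReal.lintegral_mul_le_Lp_mul_Lq μ h2 (hf.pow_const _).aemeasurable
          (hg.pow_const _).aemeasurable
    _ = ((∫⁻ t, f t ∂μ) * (∫⁻ t, g t ∂μ)) ^ ((1:ℝ)/2) := by
        simp_rw [← ENNReal.rpow_mul]
        norm_num
        rw [ENNReal.mul_rpow_of_nonneg _ _ (by norm_num : (0:ℝ) ≤ 1/2)]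

lemma pull_cs {f g : ℝ → ℝ≥0∞} (hf : Measurable f) (hg : Measurable g) (c : ℝ≥0∞) :
    ∫⁻ a, (c * (f a * g a)) ^ ((1:ℝ)/2) ≤ (c * ((∫⁻ a, f a) * (∫⁻ a, g a))) ^ ((1:ℝ)/2) := by
  have h12 : (0:ℝ) ≤ 1/2 := by norm_num
  calc ∫⁻ a, (c * (f a * g a)) ^ ((1:ℝ)/2)
      = ∫⁻ a, c ^ ((1:ℝ)/2) * (f a * g a) ^ ((1:ℝ)/2) := by
        simp_rw [ENNReal.mul_rpow_of_nonneg _ _ h12]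
    _ = c ^ ((1:ℝ)/2) * ∫⁻ a, (f a * g a) ^ ((1:ℝ)/2) := lintegral_const_mul _ (by fun_prop)
    _ ≤ c ^ ((1:ℝ)/2) * ((∫⁻ a, f a) * (∫⁻ a, g a)) ^ ((1:ℝ)/2) := by
        gcongr
        exact cs volume hf hg
    _ = (c * ((∫⁻ a, f a) * (∫⁻ a, g a))) ^ ((1:ℝ)/2) :=
        (ENNReal.mul_rpow_of_nonneg _ _ h12).symm

lemma LW (h0 h1 h2 : ℝ × ℝ × ℝ → ℝ≥0∞) (m0 : Measurable h0) (m1 : Measurable h1)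
    (m2 : Measurable h2) :
    ∫⁻ p : ℝ × ℝ × ℝ, ((∫⁻ t, h0 (t, p.2)) *
        ((∫⁻ t, h1 (p.1, t, p.2.2)) * (∫⁻ t, h2 (p.1, p.2.1, t)))) ^ ((1:ℝ)/2)
      ≤ ((∫⁻ p, h0 p) * ((∫⁻ p, h1 p) * (∫⁻ p, h2 p))) ^ ((1:ℝ)/2) := by
  set A : ℝ × ℝ → ℝ≥0∞ := fun q => ∫⁻ t, h0 (t, q) with hA
  set B : ℝ × ℝ → ℝ≥0∞ := fun r => ∫⁻ t, h1 (r.1, t, r.2) with hB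
  set C : ℝ × ℝ → ℝ≥0∞ := fun r => ∫⁻ t, h2 (r.1, r.2, t) with hC
  have mA : Measurable A := m0.lintegral_prod_left'
  have mB : Measurable B := by
    have : Measurable (fun z : (ℝ × ℝ) × ℝ => h1 (z.1.1, z.2, z.1.2)) := by fun_prop
    exact this.lintegral_prod_right'
  have mC : Measurable C := by
    have : Measurable (fun z : (ℝ × ℝ) × ℝ => h2 (z.1.1, z.1.2, z.2)) := by fun_prop
    exact this.lintegral_prod_right'
  set B' : ℝ → ℝ≥0∞ := fun c => ∫⁻ a, B (a, c) with hB'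
  set C' : ℝ → ℝ≥0∞ := fun b => ∫⁻ a, C (a, b) with hC'
  set A' : ℝ → ℝ≥0∞ := fun b => ∫⁻ c, A (b, c) with hA'
  have mB' : Measurable B' := mB.lintegral_prod_left'
  have mC' : Measurable C' := mC.lintegral_prod_left'
  have mA' : Measurable A' := mA.lintegral_prod_right'
  have mF : Measurable fun p : ℝ × ℝ × ℝ =>
      (A p.2 * (B (p.1, p.2.2) * C (p.1, p.2.1))) ^ ((1:ℝ)/2) := by fun_prop
  have IAeq : ∫⁻ p : ℝ × ℝ × ℝ, h0 p = ∫⁻ b, A' b := by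
    rw [Measure.volume_eq_prod, lintegral_prod_symm _ m0.aemeasurable]
    rw [Measure.volume_eq_prod ℝ ℝ, lintegral_prod _ mA.aemeasurable]
  have IBeq : ∫⁻ p : ℝ × ℝ × ℝ, h1 p = ∫⁻ c, B' c := by
    rw [Measure.volume_eq_prod, lintegral_prod _ m1.aemeasurable]
    have step : ∀ a : ℝ, ∫⁻ r : ℝ × ℝ, h1 (a, r) = ∫⁻ c, ∫⁻ t, h1 (a, t, c) := fun a => by
      rw [Measure.volume_eq_prod, lintegral_prod_symm (fun r : ℝ × ℝ => h1 (a, r)) ((m1.comp measurable_prodMk_left).aemeasurable)]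
    simp_rw [step]
    exact lintegral_lintegral_swap mB.aemeasurable
  have ICeq : ∫⁻ p : ℝ × ℝ × ℝ, h2 p = ∫⁻ b, C' b := by
    rw [Measure.volume_eq_prod, lintegral_prod _ m2.aemeasurable]
    have step : ∀ a : ℝ, ∫⁻ r : ℝ × ℝ, h2 (a, r) = ∫⁻ b, ∫⁻ t, h2 (a, b, t) := fun a => by
      rw [Measure.volume_eq_prod, lintegral_prod (fun r : ℝ × ℝ => h2 (a, r)) ((m2.comp measurable_prodMk_left).aemeasurable)]
    simp_rw [step]
    exact lintegral_lintegral_swap mC.aemeasurable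
  calc ∫⁻ p : ℝ × ℝ × ℝ, ((∫⁻ t, h0 (t, p.2)) *
        ((∫⁻ t, h1 (p.1, t, p.2.2)) * (∫⁻ t, h2 (p.1, p.2.1, t)))) ^ ((1:ℝ)/2)
      = ∫⁻ q : ℝ × ℝ, ∫⁻ a : ℝ, (A q * (B (a, q.2) * C (a, q.1))) ^ ((1:ℝ)/2) := by
        rw [Measure.volume_eq_prod, lintegral_prod_symm _ mF.aemeasurable]
    _ ≤ ∫⁻ q : ℝ × ℝ, (A q * (B' q.2 * C' q.1)) ^ ((1:ℝ)/2) := by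
        refine lintegral_mono fun q => ?_
        exact pull_cs (by fun_prop) (by fun_prop) (A q)
    _ = ∫⁻ b : ℝ, ∫⁻ c : ℝ, (A (b, c) * (B' c * C' b)) ^ ((1:ℝ)/2) := by
        rw [Measure.volume_eq_prod ℝ ℝ, lintegral_prod _ (by fun_prop :
          Measurable fun q : ℝ × ℝ => (A q * (B' q.2 * C' q.1)) ^ ((1:ℝ)/2)).aemeasurable]
    _ ≤ ∫⁻ b : ℝ, (C' b * (A' b * (∫⁻ c, B' c))) ^ ((1:ℝ)/2) := by
        refine lintegral_mono fun b => ?_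
        have harr : ∀ c : ℝ, A (b, c) * (B' c * C' b) = C' b * (A (b, c) * B' c) :=
          fun c => by ring
        simp_rw [harr]
        exact pull_cs (by fun_prop) mB' (C' b)
    _ ≤ ((∫⁻ p, h0 p) * ((∫⁻ p, h1 p) * (∫⁻ p, h2 p))) ^ ((1:ℝ)/2) := by
        rw [IAeq, IBeq, ICeq]
        have harr : ∀ b : ℝ, C' b * (A' b * (∫⁻ c, B' c)) =
            (∫⁻ c, B' c) * (C' b * A' b) := fun b => by ring
        simp_rw [harr]
        refine le_trans (pull_cs mC' mA' _) (le_of_eq ?_)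
        congr 1
        ring



lemma core (v : ℝ × ℝ × ℝ → ℝ) (d : Fin 3 → (ℝ × ℝ × ℝ) → ℝ)
    (hd : ∀ i, Continuous (d i))
    (hd0 : ∀ (b c t : ℝ), HasDerivAt (fun s => v (s, b, c)) (d 0 (t, b, c)) t)
    (hd1 : ∀ (a c t : ℝ), HasDerivAt (fun s => v (a, s, c)) (d 1 (a, t, c)) t)
    (hd2 : ∀ (a b t : ℝ), HasDerivAt (fun s => v (a, b, s)) (d 2 (a, b, t)) t)
    (hl0 : ∀ b c : ℝ, Tendsto (fun s => v (s, b, c)) atBot (nhds 0))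
    (hl1 : ∀ a c : ℝ, Tendsto (fun s => v (a, s, c)) atBot (nhds 0))
    (hl2 : ∀ a b : ℝ, Tendsto (fun s => v (a, b, s)) atBot (nhds 0)) :
    ∫⁻ p, (‖v p‖₊ : ℝ≥0∞) ^ ((3:ℝ)/2)
      ≤ ((∫⁻ p, (‖d 0 p‖₊ : ℝ≥0∞)) * ((∫⁻ p, (‖d 1 p‖₊ : ℝ≥0∞)) *
          (∫⁻ p, (‖d 2 p‖₊ : ℝ≥0∞)))) ^ ((1:ℝ)/2) := by
  refine le_trans (lintegral_mono fun p => ?_)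
    (LW (fun p => ‖d 0 p‖₊) (fun p => ‖d 1 p‖₊) (fun p => ‖d 2 p‖₊)
      (hd 0).measurable.nnnorm.coe_nnreal_ennreal
      (hd 1).measurable.nnnorm.coe_nnreal_ennreal
      (hd 2).measurable.nnnorm.coe_nnreal_ennreal)
  set a : ℝ≥0∞ := (‖v p‖₊ : ℝ≥0∞) with ha
  have e0 : a ≤ ∫⁻ t, (‖d 0 (t, p.2)‖₊ : ℝ≥0∞) := by
    have h := oneDim (g := fun s => v (s, p.2.1, p.2.2))
      (g' := fun t => d 0 (t, p.2.1, p.2.2)) (fun t => hd0 p.2.1 p.2.2 t)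
      ((hd 0).comp (by fun_prop)) (hl0 _ _) p.1
    simpa [ha] using h
  have e1 : a ≤ ∫⁻ t, (‖d 1 (p.1, t, p.2.2)‖₊ : ℝ≥0∞) := by
    have h := oneDim (g := fun s => v (p.1, s, p.2.2))
      (g' := fun t => d 1 (p.1, t, p.2.2)) (fun t => hd1 p.1 p.2.2 t)
      ((hd 1).comp (by fun_prop)) (hl1 _ _) p.2.1
    simpa [ha] using h
  have e2 : a ≤ ∫⁻ t, (‖d 2 (p.1, p.2.1, t)‖₊ : ℝ≥0∞) := by
    have h := oneDim (g := fun s => v (p.1, p.2.1, s))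
      (g' := fun t => d 2 (p.1, p.2.1, t)) (fun t => hd2 p.1 p.2.1 t)
      ((hd 2).comp (by fun_prop)) (hl2 _ _) p.2.2
    simpa [ha] using h
  have key : a ^ ((3:ℝ)/2) = (a * (a * a)) ^ ((1:ℝ)/2) := by
    have h3 : a * (a * a) = a ^ (3:ℝ) := by
      rw [show (3:ℝ) = ((3:ℕ):ℝ) by norm_num, ENNReal.rpow_natCast]
      ring
    rw [h3, ← ENNReal.rpow_mul]; norm_num
  rw [key]
  exact ENNReal.rpow_le_rpow (by gcongr) (by norm_num)


noncomputable section

abbrev E3 := EuclideanSpace ℝ (Fin 3)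

def Psi : ℝ × ℝ × ℝ → E3 := fun p =>
  (EuclideanSpace.equiv (Fin 3) ℝ).symm ![p.1, p.2.1, p.2.2]

lemma Psi_eq : Psi = (⇑(MeasurableEquiv.toLp 2 (Fin 3 → ℝ))) ∘
    (⇑(MeasurableEquiv.piFinSuccAbove (fun _ : Fin 3 => ℝ) 0).symm) ∘
    (Prod.map (id : ℝ → ℝ) (⇑(MeasurableEquiv.finTwoArrow (α := ℝ)).symm)) := by
  funext p
  ext j
  fin_cases j <;>
    · try simp [Psi, MeasurableEquiv.piFinSuccAbove, MeasurableEquiv.finTwoArrow,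
        MeasurableEquiv.coe_toLp, Fin.insertNth, Fin.cons_succ, Matrix.vecHead,
        Matrix.vecTail]
      try rfl

lemma mPsi : MeasurePreserving Psi volume volume := by
  rw [Psi_eq]
  exact ((EuclideanSpace.volume_preserving_symm_measurableEquiv_toLp (Fin 3)).symm _).comp
    (((volume_preserving_piFinSuccAbove (fun _ : Fin 3 => ℝ) 0).symm _).comp
      ((MeasurePreserving.id volume).prod ((volume_preserving_finTwoArrow ℝ).symm _)))

lemma transfer {g : E3 → ℝ≥0∞} (hg : Measurable g) :
    ∫⁻ p : ℝ × ℝ × ℝ, g (Psi p) = ∫⁻ x : E3, g x :=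
  mPsi.lintegral_comp hg

lemma Psi_line0 (s b c : ℝ) :
    Psi (s, b, c) = Psi (0, b, c) + s • (EuclideanSpace.single (0 : Fin 3) (1:ℝ)) := by
  ext j; fin_cases j <;> simp [Psi]

lemma Psi_line1 (a s c : ℝ) :
    Psi (a, s, c) = Psi (a, 0, c) + s • (EuclideanSpace.single (1 : Fin 3) (1:ℝ)) := by
  ext j; fin_cases j <;> simp [Psi]

lemma Psi_line2 (a b s : ℝ) :
    Psi (a, b, s) = Psi (a, b, 0) + s • (EuclideanSpace.single (2 : Fin 3) (1:ℝ)) := by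
  ext j; fin_cases j <;> simp [Psi]

lemma Psi_cont : Continuous Psi := by
  refine (EuclideanSpace.equiv (Fin 3) ℝ).symm.continuous.comp ?_
  refine continuous_pi fun j => ?_
  fin_cases j <;> simp [Matrix.vecHead, Matrix.vecTail] <;> fun_prop

lemma abs_coord_le (x : E3) (j : Fin 3) : |x j| ≤ ‖x‖ := by
  rw [EuclideanSpace.norm_eq]
  rw [show |x j| = Real.sqrt (x j ^ 2) by rw [Real.sqrt_sq_eq_abs]]
  apply Real.sqrt_le_sqrt
  simp only [Real.norm_eq_abs, sq_abs]
  exact Finset.single_le_sum (f := fun i => x i ^ 2) (fun i _ => sq_nonneg _)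
    (Finset.mem_univ j)

lemma Psi_app0 (p : ℝ × ℝ × ℝ) : Psi p 0 = p.1 := by simp [Psi]
lemma Psi_app1 (p : ℝ × ℝ × ℝ) : Psi p 1 = p.2.1 := by simp [Psi]
lemma Psi_app2 (p : ℝ × ℝ × ℝ) : Psi p 2 = p.2.2 := by simp [Psi]

lemma sch_line_hasDerivAt (f : SchwartzMap E3 ℝ) (x₀ e : E3) (t : ℝ) :
    HasDerivAt (fun s : ℝ => f (x₀ + s • e)) (fderiv ℝ f (x₀ + t • e) e) t := by
  have h1 : HasDerivAt (fun s : ℝ => x₀ + s • e) e t := by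
    simpa using ((hasDerivAt_id t).smul_const e).const_add x₀
  have h2 := (f.differentiableAt (x := x₀ + t • e)).hasFDerivAt
  exact h2.comp_hasDerivAt t h1

lemma sch_tendsto (f : SchwartzMap E3 ℝ) (γ : ℝ → E3)
    (hγ : Tendsto (fun s => ‖γ s‖) atBot atTop) :
    Tendsto (fun s => f (γ s)) atBot (nhds 0) := by
  have h1 : Tendsto γ atBot (cocompact E3) := by
    rw [← Metric.cobounded_eq_cocompact]
    exact tendsto_norm_atTop_iff_cobounded.1 hγ
  have h2 := f.toZeroAtInfty.zero_at_infty'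
  exact h2.comp h1

lemma sch_bound (f : SchwartzMap E3 ℝ) : ∃ M : ℝ≥0, ∀ x, (‖f x‖₊ : ℝ≥0∞) ≤ M := by
  obtain ⟨C, hC⟩ := f.decay 0 0
  refine ⟨C.toNNReal, fun x => ?_⟩
  have hx : ‖f x‖ ≤ C := by simpa using hC.2 x
  rw [← enorm_eq_nnnorm, ← ofReal_norm_eq_enorm]
  exact ENNReal.ofReal_le_ofReal hx

lemma lint_lt_top (f : SchwartzMap E3 ℝ) : ∫⁻ x, (‖f x‖₊ : ℝ≥0∞) < ⊤ :=
  (f.integrable (μ := volume)).2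

lemma lint_pow_lt_top (f : SchwartzMap E3 ℝ) {r : ℝ} (hr : 1 ≤ r) :
    ∫⁻ x, (‖f x‖₊ : ℝ≥0∞) ^ r < ⊤ := by
  obtain ⟨M, hM⟩ := sch_bound f
  have key : ∀ x, (‖f x‖₊ : ℝ≥0∞) ^ r ≤ (M : ℝ≥0∞) ^ (r - 1) * ‖f x‖₊ := by
    intro x
    calc (‖f x‖₊ : ℝ≥0∞) ^ r = (‖f x‖₊ : ℝ≥0∞) ^ (r - 1) * (‖f x‖₊ : ℝ≥0∞) ^ (1:ℝ) := by
          rw [← ENNReal.rpow_add_of_nonneg _ _ (by linarith) (by norm_num)]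
          norm_num
      _ ≤ (M : ℝ≥0∞) ^ (r - 1) * ‖f x‖₊ := by
          rw [ENNReal.rpow_one]
          exact mul_le_mul_left (ENNReal.rpow_le_rpow (hM x) (by linarith)) _
  calc ∫⁻ x, (‖f x‖₊ : ℝ≥0∞) ^ r ≤ ∫⁻ x, (M : ℝ≥0∞) ^ (r - 1) * ‖f x‖₊ :=
        lintegral_mono key
    _ = (M : ℝ≥0∞) ^ (r - 1) * ∫⁻ x, (‖f x‖₊ : ℝ≥0∞) :=
        lintegral_const_mul _ (by fun_prop)
    _ < ⊤ := ENNReal.mul_lt_top (ENNReal.rpow_lt_top_of_nonneg (by linarith)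
        ENNReal.coe_ne_top) (lint_lt_top f)

def Df (i : Fin 3) (f : SchwartzMap E3 ℝ) : SchwartzMap E3 ℝ :=
  LineDeriv.lineDerivOp (EuclideanSpace.single i (1:ℝ)) f

lemma Df_apply (i : Fin 3) (f : SchwartzMap E3 ℝ) (x : E3) :
    Df i f x = fderiv ℝ f x (EuclideanSpace.single i (1:ℝ)) := rfl

def V (f : SchwartzMap E3 ℝ) : ℝ × ℝ × ℝ → ℝ := fun p => (f (Psi p)) ^ 4

def Dv (f : SchwartzMap E3 ℝ) (i : Fin 3) : ℝ × ℝ × ℝ → ℝ := fun p =>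
  4 * (f (Psi p)) ^ 3 * (Df i f) (Psi p)

lemma Dv_cont (f : SchwartzMap E3 ℝ) (i : Fin 3) : Continuous (Dv f i) :=
  (continuous_const.mul ((f.continuous.comp Psi_cont).pow 3)).mul
    ((Df i f).continuous.comp Psi_cont)

lemma V_hd0 (f : SchwartzMap E3 ℝ) : ∀ b c t : ℝ,
    HasDerivAt (fun s => V f (s, b, c)) (Dv f 0 (t, b, c)) t := by
  intro b c t
  have h1 := (sch_line_hasDerivAt f (Psi (0, b, c))
    (EuclideanSpace.single (0 : Fin 3) (1:ℝ)) t).pow 4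
  have e1 : ∀ s : ℝ, Psi ((0:ℝ), b, c) + s • EuclideanSpace.single (0 : Fin 3) (1:ℝ)
      = Psi (s, b, c) := fun s => (Psi_line0 s b c).symm
  simp only [e1] at h1
  simp only [V, Dv, Df_apply]
  exact h1.congr_deriv (by norm_num)

lemma V_hd1 (f : SchwartzMap E3 ℝ) : ∀ a c t : ℝ,
    HasDerivAt (fun s => V f (a, s, c)) (Dv f 1 (a, t, c)) t := by
  intro a c t
  have h1 := (sch_line_hasDerivAt f (Psi (a, 0, c))
    (EuclideanSpace.single (1 : Fin 3) (1:ℝ)) t).pow 4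
  have e1 : ∀ s : ℝ, Psi (a, (0:ℝ), c) + s • EuclideanSpace.single (1 : Fin 3) (1:ℝ)
      = Psi (a, s, c) := fun s => (Psi_line1 a s c).symm
  simp only [e1] at h1
  simp only [V, Dv, Df_apply]
  exact h1.congr_deriv (by norm_num)

lemma V_hd2 (f : SchwartzMap E3 ℝ) : ∀ a b t : ℝ,
    HasDerivAt (fun s => V f (a, b, s)) (Dv f 2 (a, b, t)) t := by
  intro a b t
  have h1 := (sch_line_hasDerivAt f (Psi (a, b, 0))
    (EuclideanSpace.single (2 : Fin 3) (1:ℝ)) t).pow 4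
  have e1 : ∀ s : ℝ, Psi (a, b, (0:ℝ)) + s • EuclideanSpace.single (2 : Fin 3) (1:ℝ)
      = Psi (a, b, s) := fun s => (Psi_line2 a b s).symm
  simp only [e1] at h1
  simp only [V, Dv, Df_apply]
  exact h1.congr_deriv (by norm_num)

lemma V_hl0 (f : SchwartzMap E3 ℝ) : ∀ b c : ℝ,
    Tendsto (fun s => V f (s, b, c)) atBot (nhds 0) := by
  intro b c
  have h : Tendsto (fun s => f (Psi (s, b, c))) atBot (nhds 0) := by
    refine sch_tendsto f _ (tendsto_atTop_mono (fun s => ?_) tendsto_abs_atBot_atTop)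
    have h2 := abs_coord_le (Psi (s, b, c)) 0
    rwa [Psi_app0] at h2
  simpa [V] using h.pow 4

lemma V_hl1 (f : SchwartzMap E3 ℝ) : ∀ a c : ℝ,
    Tendsto (fun s => V f (a, s, c)) atBot (nhds 0) := by
  intro a c
  have h : Tendsto (fun s => f (Psi (a, s, c))) atBot (nhds 0) := by
    refine sch_tendsto f _ (tendsto_atTop_mono (fun s => ?_) tendsto_abs_atBot_atTop)
    have h2 := abs_coord_le (Psi (a, s, c)) 1
    rwa [Psi_app1] at h2
  simpa [V] using h.pow 4

lemma V_hl2 (f : SchwartzMap E3 ℝ) : ∀ a b : ℝ,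
    Tendsto (fun s => V f (a, b, s)) atBot (nhds 0) := by
  intro a b
  have h : Tendsto (fun s => f (Psi (a, b, s))) atBot (nhds 0) := by
    refine sch_tendsto f _ (tendsto_atTop_mono (fun s => ?_) tendsto_abs_atBot_atTop)
    have h2 := abs_coord_le (Psi (a, b, s)) 2
    rwa [Psi_app2] at h2
  simpa [V] using h.pow 4

lemma sobolev6 (f : SchwartzMap E3 ℝ) :
    (∫⁻ x, (‖f x‖₊ : ℝ≥0∞) ^ (6:ℝ)) ≤
      4096 * ((∫⁻ x, (‖Df 0 f x‖₊ : ℝ≥0∞) ^ (2:ℝ)) *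
        ((∫⁻ x, (‖Df 1 f x‖₊ : ℝ≥0∞) ^ (2:ℝ)) *
          (∫⁻ x, (‖Df 2 f x‖₊ : ℝ≥0∞) ^ (2:ℝ)))) := by
  have h12 : (0:ℝ) ≤ 1/2 := by norm_num
  have mf : Measurable fun x : E3 => (‖f x‖₊ : ℝ≥0∞) :=
    f.continuous.measurable.nnnorm.coe_nnreal_ennreal
  have mdf : ∀ i, Measurable fun x : E3 => (‖Df i f x‖₊ : ℝ≥0∞) := fun i =>
    (Df i f).continuous.measurable.nnnorm.coe_nnreal_ennreal
  set X := ∫⁻ x, (‖f x‖₊ : ℝ≥0∞) ^ (6:ℝ) with hXdef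
  set I : Fin 3 → ℝ≥0∞ := fun i => ∫⁻ x, (‖Df i f x‖₊ : ℝ≥0∞) ^ (2:ℝ) with hIdef
  show X ≤ 4096 * (I 0 * (I 1 * I 2))
  have hcore := core (V f) (Dv f) (Dv_cont f) (V_hd0 f) (V_hd1 f) (V_hd2 f)
    (V_hl0 f) (V_hl1 f) (V_hl2 f)
  have lhs_eq : ∫⁻ p, (‖V f p‖₊ : ℝ≥0∞) ^ ((3:ℝ)/2) = X := by
    have e : ∀ p, (‖V f p‖₊ : ℝ≥0∞) ^ ((3:ℝ)/2)
        = (fun x : E3 => (‖f x‖₊ : ℝ≥0∞) ^ (6:ℝ)) (Psi p) := by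
      intro p
      simp only [V]
      rw [nnnorm_pow, ENNReal.coe_pow, ← ENNReal.rpow_natCast ((‖f (Psi p)‖₊ : ℝ≥0∞)) 4,
        ← ENNReal.rpow_mul]
      norm_num
    simp_rw [e]
    exact transfer (g := fun x : E3 => (‖f x‖₊ : ℝ≥0∞) ^ (6:ℝ)) (by fun_prop)
  have rhs_i : ∀ i, (∫⁻ p, (‖Dv f i p‖₊ : ℝ≥0∞))
      ≤ 4 * (X ^ ((1:ℝ)/2) * (I i) ^ ((1:ℝ)/2)) := by
    intro i
    have tr : (∫⁻ p, (‖Dv f i p‖₊ : ℝ≥0∞))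
        = ∫⁻ x : E3, (‖4 * f x ^ 3 * Df i f x‖₊ : ℝ≥0∞) := by
      exact transfer (g := fun x : E3 => (‖4 * f x ^ 3 * Df i f x‖₊ : ℝ≥0∞))
        ((continuous_const.mul (f.continuous.pow 3)).mul
          (Df i f).continuous).measurable.nnnorm.coe_nnreal_ennreal
    have e : ∀ x : E3, (‖4 * f x ^ 3 * Df i f x‖₊ : ℝ≥0∞)
        = 4 * ((‖f x‖₊ : ℝ≥0∞) ^ (3:ℝ) * (‖Df i f x‖₊ : ℝ≥0∞)) := by
      intro x
      rw [nnnorm_mul, nnnorm_mul, nnnorm_pow]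
      push_cast
      rw [← ENNReal.rpow_natCast ((‖f x‖₊ : ℝ≥0∞)) 3]
      norm_num [mul_assoc]
    calc (∫⁻ p, (‖Dv f i p‖₊ : ℝ≥0∞))
        = ∫⁻ x : E3, 4 * ((‖f x‖₊ : ℝ≥0∞) ^ (3:ℝ) * (‖Df i f x‖₊ : ℝ≥0∞)) := by
          rw [tr]; exact lintegral_congr e
      _ = 4 * ∫⁻ x : E3, (‖f x‖₊ : ℝ≥0∞) ^ (3:ℝ) * (‖Df i f x‖₊ : ℝ≥0∞) :=
          lintegral_const_mul _ (by fun_prop)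
      _ ≤ 4 * (X ^ ((1:ℝ)/2) * (I i) ^ ((1:ℝ)/2)) := by
          gcongr
          have hold := ENNReal.lintegral_mul_le_Lp_mul_Lq volume
            (⟨by norm_num, by norm_num, by norm_num⟩ : Real.HolderConjugate 2 2)
            (by fun_prop : AEMeasurable (fun x : E3 => (‖f x‖₊ : ℝ≥0∞) ^ (3:ℝ)) volume)
            ((mdf i).aemeasurable)
          simp only [Pi.mul_apply] at hold
          refine hold.trans (le_of_eq ?_)
          have e2 : ∀ x : E3, ((‖f x‖₊ : ℝ≥0∞) ^ (3:ℝ)) ^ (2:ℝ)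
              = (‖f x‖₊ : ℝ≥0∞) ^ (6:ℝ) := fun x => by
            rw [← ENNReal.rpow_mul]; norm_num
          simp_rw [e2]
          rfl
  have hfinal : X ≤ 8 * (X ^ ((3:ℝ)/4) * (I 0 * (I 1 * I 2)) ^ ((1:ℝ)/4)) := by
    calc X = ∫⁻ p, (‖V f p‖₊ : ℝ≥0∞) ^ ((3:ℝ)/2) := lhs_eq.symm
      _ ≤ ((∫⁻ p, (‖Dv f 0 p‖₊ : ℝ≥0∞)) * ((∫⁻ p, (‖Dv f 1 p‖₊ : ℝ≥0∞)) *
          (∫⁻ p, (‖Dv f 2 p‖₊ : ℝ≥0∞)))) ^ ((1:ℝ)/2) := hcore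
      _ ≤ ((4 * (X ^ ((1:ℝ)/2) * (I 0) ^ ((1:ℝ)/2))) *
          ((4 * (X ^ ((1:ℝ)/2) * (I 1) ^ ((1:ℝ)/2))) *
           (4 * (X ^ ((1:ℝ)/2) * (I 2) ^ ((1:ℝ)/2))))) ^ ((1:ℝ)/2) :=
          ENNReal.rpow_le_rpow (by gcongr <;> [exact rhs_i 0; exact rhs_i 1; exact rhs_i 2])
            h12
      _ = 8 * (X ^ ((3:ℝ)/4) * (I 0 * (I 1 * I 2)) ^ ((1:ℝ)/4)) := by
          have e64 : (4 * (X ^ ((1:ℝ)/2) * (I 0) ^ ((1:ℝ)/2))) *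
              ((4 * (X ^ ((1:ℝ)/2) * (I 1) ^ ((1:ℝ)/2))) *
               (4 * (X ^ ((1:ℝ)/2) * (I 2) ^ ((1:ℝ)/2))))
              = 64 * (X ^ ((3:ℝ)/2) * (I 0 * (I 1 * I 2)) ^ ((1:ℝ)/2)) := by
            rw [show X ^ ((3:ℝ)/2) = X ^ ((1:ℝ)/2) * (X ^ ((1:ℝ)/2) * X ^ ((1:ℝ)/2)) by
                rw [← ENNReal.rpow_add_of_nonneg _ _ h12 h12,
                  ← ENNReal.rpow_add_of_nonneg _ _ h12 (by norm_num)]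
                norm_num,
              ENNReal.mul_rpow_of_nonneg _ _ h12, ENNReal.mul_rpow_of_nonneg _ _ h12]
            ring
          rw [e64, ENNReal.mul_rpow_of_nonneg _ _ h12, ENNReal.mul_rpow_of_nonneg _ _ h12,
            ← ENNReal.rpow_mul, ← ENNReal.rpow_mul,
            show (64:ℝ≥0∞) ^ ((1:ℝ)/2) = 8 by
              rw [show (64:ℝ≥0∞) = 8 ^ (2:ℕ) by norm_num, ← ENNReal.rpow_natCast,
                ← ENNReal.rpow_mul]
              norm_num]
          norm_num
  rcases eq_or_ne X 0 with h0 | h0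
  · rw [h0]; exact zero_le
  have hXt : X ≠ ⊤ := (lint_pow_lt_top f (by norm_num : (1:ℝ) ≤ 6)).ne
  have hP : X ^ ((1:ℝ)/4) ≤ 8 * (I 0 * (I 1 * I 2)) ^ ((1:ℝ)/4) := by
    have h34 : X = X ^ ((3:ℝ)/4) * X ^ ((1:ℝ)/4) := by
      rw [← ENNReal.rpow_add_of_nonneg _ _ (by norm_num) (by norm_num)]
      norm_num
    have step : X ^ ((3:ℝ)/4) * X ^ ((1:ℝ)/4)
        ≤ X ^ ((3:ℝ)/4) * (8 * (I 0 * (I 1 * I 2)) ^ ((1:ℝ)/4)) := by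
      rw [← h34]
      refine hfinal.trans (le_of_eq (by ring))
    exact (ENNReal.mul_le_mul_iff_right
      (by simp [ENNReal.rpow_eq_zero_iff, h0, hXt] : X ^ ((3:ℝ)/4) ≠ 0)
      (ENNReal.rpow_ne_top_of_nonneg (by norm_num) hXt)).1 step
  have h4 := ENNReal.rpow_le_rpow hP (by norm_num : (0:ℝ) ≤ 4)
  rw [← ENNReal.rpow_mul, ENNReal.mul_rpow_of_nonneg _ _ (by norm_num : (0:ℝ) ≤ 4),
    ← ENNReal.rpow_mul] at h4
  norm_num at h4
  exact h4

lemma L3 (f : SchwartzMap E3 ℝ) :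
    (∫⁻ x, (‖f x‖₊ : ℝ≥0∞) ^ (3:ℝ)) ≤
      8 * ((∫⁻ x, (‖f x‖₊ : ℝ≥0∞) ^ (2:ℝ)) ^ ((3:ℝ)/4) *
        ((∫⁻ x, (‖Df 0 f x‖₊ : ℝ≥0∞) ^ (2:ℝ)) *
         ((∫⁻ x, (‖Df 1 f x‖₊ : ℝ≥0∞) ^ (2:ℝ)) *
          (∫⁻ x, (‖Df 2 f x‖₊ : ℝ≥0∞) ^ (2:ℝ)))) ^ ((1:ℝ)/4)) := by
  have mf : Measurable fun x : E3 => (‖f x‖₊ : ℝ≥0∞) :=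
    f.continuous.measurable.nnnorm.coe_nnreal_ennreal
  set S := ∫⁻ x, (‖f x‖₊ : ℝ≥0∞) ^ (2:ℝ) with hS
  set P := (∫⁻ x, (‖Df 0 f x‖₊ : ℝ≥0∞) ^ (2:ℝ)) *
         ((∫⁻ x, (‖Df 1 f x‖₊ : ℝ≥0∞) ^ (2:ℝ)) *
          (∫⁻ x, (‖Df 2 f x‖₊ : ℝ≥0∞) ^ (2:ℝ))) with hP
  have hconj : Real.HolderConjugate (4/3) 4 := ⟨by norm_num, by norm_num, by norm_num⟩
  have hold := ENNReal.lintegral_mul_le_Lp_mul_Lq volume hconj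
    (by fun_prop : AEMeasurable (fun x : E3 => (‖f x‖₊ : ℝ≥0∞) ^ ((3:ℝ)/2)) volume)
    (by fun_prop : AEMeasurable (fun x : E3 => (‖f x‖₊ : ℝ≥0∞) ^ ((3:ℝ)/2)) volume)
  simp only [Pi.mul_apply] at hold
  calc ∫⁻ x, (‖f x‖₊ : ℝ≥0∞) ^ (3:ℝ)
      = ∫⁻ x, (‖f x‖₊ : ℝ≥0∞) ^ ((3:ℝ)/2) * (‖f x‖₊ : ℝ≥0∞) ^ ((3:ℝ)/2) := by
        refine lintegral_congr fun x => ?_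
        rw [← ENNReal.rpow_add_of_nonneg _ _ (by norm_num) (by norm_num)]
        norm_num
    _ ≤ (∫⁻ x, ((‖f x‖₊ : ℝ≥0∞) ^ ((3:ℝ)/2)) ^ ((4:ℝ)/3)) ^ (1/((4:ℝ)/3)) *
        (∫⁻ x, ((‖f x‖₊ : ℝ≥0∞) ^ ((3:ℝ)/2)) ^ (4:ℝ)) ^ (1/(4:ℝ)) := hold
    _ = S ^ ((3:ℝ)/4) * (∫⁻ x, (‖f x‖₊ : ℝ≥0∞) ^ (6:ℝ)) ^ ((1:ℝ)/4) := by
        congr 1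
        · congr 1
          · refine lintegral_congr fun x => ?_
            rw [← ENNReal.rpow_mul]; norm_num
          · norm_num
        · congr 1
          refine lintegral_congr fun x => ?_
          rw [← ENNReal.rpow_mul]; norm_num
    _ ≤ S ^ ((3:ℝ)/4) * (4096 * P) ^ ((1:ℝ)/4) := by
        gcongr
        exact sobolev6 f
    _ = 8 * (S ^ ((3:ℝ)/4) * P ^ ((1:ℝ)/4)) := by
        rw [ENNReal.mul_rpow_of_nonneg _ _ (by norm_num : (0:ℝ) ≤ 1/4),
          show (4096:ℝ≥0∞) ^ ((1:ℝ)/4) = 8 by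
            rw [show (4096:ℝ≥0∞) = 8 ^ (4:ℕ) by norm_num, ← ENNReal.rpow_natCast,
              ← ENNReal.rpow_mul]
            norm_num]
        ring

lemma Df_comm (f : SchwartzMap E3 ℝ) (i j : Fin 3) (x : E3) :
    Df i (Df j f) x = Df j (Df i f) x := by
  have hsym : IsSymmSndFDerivAt ℝ (⇑f) x :=
    ((f.smooth 2).contDiffAt).isSymmSndFDerivAt (by simp [minSmoothness_of_isRCLikeNormedField])
  have hD : DifferentiableAt ℝ (fderiv ℝ (⇑f)) x :=
    (((f.smooth 2).fderiv_right (m := 1) (by exact_mod_cast le_rfl)).differentiable one_ne_zero).differentiableAt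
  have key : ∀ a b : Fin 3,
      Df a (Df b f) x = fderiv ℝ (fderiv ℝ (⇑f)) x (EuclideanSpace.single a (1:ℝ))
        (EuclideanSpace.single b (1:ℝ)) := by
    intro a b
    have hfun : (⇑(Df b f)) = fun y => fderiv ℝ (⇑f) y (EuclideanSpace.single b (1:ℝ)) :=
      funext fun y => Df_apply b f y
    rw [Df_apply, hfun, fderiv_clm_apply hD (differentiableAt_const _)]
    simp
  rw [key i j, key j i, hsym.eq]

lemma pointwise81 (b : Fin 3 × Fin 3 → ℝ) (hb : ∀ p, 0 ≤ b p) :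
    (∑ p, b p ^ 2) ^ ((3:ℝ)/2) ≤ 81 * ∑ p, b p ^ 3 := by
  have h1 : (∑ p, b p ^ 2) ≤ (∑ p, b p) ^ 2 :=
    Finset.sum_sq_le_sq_sum_of_nonneg (fun p _ => hb p)
  have hs : (0:ℝ) ≤ ∑ p, b p := Finset.sum_nonneg fun p _ => hb p
  have h2 : ((∑ p, b p ^ 2)) ^ ((3:ℝ)/2) ≤ ((∑ p, b p) ^ 2) ^ ((3:ℝ)/2) :=
    Real.rpow_le_rpow (by positivity) h1 (by norm_num)
  have h3 : (((∑ p, b p) ^ 2 : ℝ)) ^ ((3:ℝ)/2) = (∑ p, b p) ^ (3:ℕ) := by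
    rw [← Real.rpow_natCast (∑ p, b p) 2, ← Real.rpow_mul hs]
    norm_num
  have h4 : (∑ p, b p) ^ (3:ℕ) ≤ 81 * ∑ p, b p ^ (3:ℕ) := by
    have h5 := pow_sum_div_card_le_sum_pow (f := b) (s := Finset.univ)
      (fun p _ => hb p) 2
    have hcard : ((Finset.univ : Finset (Fin 3 × Fin 3)).card : ℝ) = 9 := by simp
    rw [div_le_iff₀ (by rw [hcard]; norm_num)] at h5
    calc (∑ p, b p) ^ (3:ℕ) ≤ (∑ p, b p ^ (3:ℕ)) * ((Finset.univ : Finset (Fin 3 × Fin 3)).card : ℝ) ^ 2 := h5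
        _ = 81 * ∑ p, b p ^ (3:ℕ) := by rw [hcard]; ring
  calc (∑ p, b p ^ 2) ^ ((3:ℝ)/2) ≤ ((∑ p, b p) ^ 2) ^ ((3:ℝ)/2) := h2
    _ = (∑ p, b p) ^ (3:ℕ) := h3
    _ ≤ 81 * ∑ p, b p ^ (3:ℕ) := h4
    _ = 81 * ∑ p, b p ^ 3 := by norm_num

lemma ofReal_sq (y : ℝ) : ENNReal.ofReal (y ^ 2) = (‖y‖₊ : ℝ≥0∞) ^ (2:ℝ) := by
  rw [← sq_abs, ← Real.norm_eq_abs, ENNReal.ofReal_pow (norm_nonneg y),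
    ofReal_norm_eq_enorm, enorm_eq_nnnorm, ← ENNReal.rpow_natCast]
  norm_num

lemma ofReal_cube_abs (y : ℝ) : ENNReal.ofReal (|y| ^ 3) = (‖y‖₊ : ℝ≥0∞) ^ (3:ℝ) := by
  rw [← Real.norm_eq_abs, ENNReal.ofReal_pow (norm_nonneg y),
    ofReal_norm_eq_enorm, enorm_eq_nnnorm, ← ENNReal.rpow_natCast]
  norm_num

lemma integral_eq_toReal {F : E3 → ℝ} (hF : Continuous F) (hF0 : ∀ x, 0 ≤ F x) :
    ∫ x, F x = (∫⁻ x, ENNReal.ofReal (F x)).toReal := by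
  rw [MeasureTheory.integral_eq_lintegral_of_nonneg_ae (Filter.Eventually.of_forall hF0)
    hF.aestronglyMeasurable]

lemma term_le_sum9 (F : Fin 3 → Fin 3 → ℝ≥0∞) (i j : Fin 3) :
    F i j ≤ ∑ i', ∑ j', F i' j' := by
  calc F i j ≤ ∑ j', F i j' := Finset.single_le_sum (fun _ _ => zero_le) (Finset.mem_univ j)
    _ ≤ ∑ i', ∑ j', F i' j' :=
      Finset.single_le_sum (f := fun i' => ∑ j', F i' j') (fun _ _ => zero_le)
        (Finset.mem_univ i)

end







noncomputable def pd (i : Fin 3) (f : EuclideanSpace ℝ (Fin 3) → ℝ)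
    (x : EuclideanSpace ℝ (Fin 3)) : ℝ :=
  fderiv ℝ f x (EuclideanSpace.single i 1)

/-- `‖∇u‖_{L³}³ ≤ C ‖∇u‖_{L²}^{3/2} ‖∇²u‖_{L²} ‖∇∂₃u‖_{L²}^{1/2}` for Schwartz fields. -/
theorem stmt_19 :
    ∃ C : ℝ, 0 < C ∧ ∀ u : Fin 3 → SchwartzMap (EuclideanSpace ℝ (Fin 3)) ℝ,
      (∫ x, (∑ i : Fin 3, ∑ j : Fin 3, (pd j (u i) x) ^ 2) ^ ((3:ℝ)/2)) ≤
        C * (∫ x, ∑ i : Fin 3, ∑ j : Fin 3, (pd j (u i) x) ^ 2) ^ ((3:ℝ)/4) *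
            (∫ x, ∑ i : Fin 3, ∑ j : Fin 3, ∑ k : Fin 3, (pd k (pd j (u i)) x) ^ 2) ^ ((1:ℝ)/2) *
            (∫ x, ∑ i : Fin 3, ∑ j : Fin 3, (pd j (pd 2 (u i)) x) ^ 2) ^ ((1:ℝ)/4) := by
  refine ⟨5832, by norm_num, fun u => ?_⟩
  classical
  set g : Fin 3 → Fin 3 → SchwartzMap E3 ℝ := fun i j => Df j (u i) with hgdef
  have hpd2 : ∀ (i j k : Fin 3) (x : E3), pd k (pd j (⇑(u i))) x = Df k (g i j) x :=
    fun i j k x => rfl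
  have hpdD : ∀ (i j : Fin 3) (x : E3), pd j (pd 2 (⇑(u i))) x = Df j (Df 2 (u i)) x :=
    fun i j x => rfl
  have hpd : ∀ (i j : Fin 3) (x : E3), pd j (⇑(u i)) x = g i j x := fun i j x => rfl
  have mgj : ∀ (h : SchwartzMap E3 ℝ) (r : ℝ), Measurable fun x => (‖h x‖₊ : ℝ≥0∞) ^ r := by
    intro h r
    have hm := h.continuous.measurable.nnnorm.coe_nnreal_ennreal
    fun_prop
  set Ae := ∑ i : Fin 3, ∑ j : Fin 3, ∫⁻ x, (‖g i j x‖₊ : ℝ≥0∞) ^ (2:ℝ) with hAe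
  set Be := ∑ i : Fin 3, ∑ j : Fin 3, ∑ k : Fin 3,
    ∫⁻ x, (‖Df k (g i j) x‖₊ : ℝ≥0∞) ^ (2:ℝ) with hBe
  set De := ∑ i : Fin 3, ∑ j : Fin 3, ∫⁻ x, (‖Df j (Df 2 (u i)) x‖₊ : ℝ≥0∞) ^ (2:ℝ) with hDe
  set K := Ae ^ ((3:ℝ)/4) * (Be ^ ((1:ℝ)/2) * De ^ ((1:ℝ)/4)) with hK
  -- each scalar component estimate
  have step3 : ∀ i j : Fin 3, (∫⁻ x, (‖g i j x‖₊ : ℝ≥0∞) ^ (3:ℝ)) ≤ 8 * K := by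
    intro i j
    refine (L3 (g i j)).trans ?_
    have hS : (∫⁻ x, (‖g i j x‖₊ : ℝ≥0∞) ^ (2:ℝ)) ≤ Ae :=
      term_le_sum9 (fun i j => ∫⁻ x, (‖g i j x‖₊ : ℝ≥0∞) ^ (2:ℝ)) i j
    have hI0 : (∫⁻ x, (‖Df 0 (g i j) x‖₊ : ℝ≥0∞) ^ (2:ℝ)) ≤ Be := by
      refine le_trans (Finset.single_le_sum
        (f := fun k => ∫⁻ x, (‖Df k (g i j) x‖₊ : ℝ≥0∞) ^ (2:ℝ))
        (fun _ _ => zero_le) (Finset.mem_univ 0)) ?_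
      exact term_le_sum9 (fun i j => ∑ k, ∫⁻ x, (‖Df k (g i j) x‖₊ : ℝ≥0∞) ^ (2:ℝ)) i j
    have hI1 : (∫⁻ x, (‖Df 1 (g i j) x‖₊ : ℝ≥0∞) ^ (2:ℝ)) ≤ Be := by
      refine le_trans (Finset.single_le_sum
        (f := fun k => ∫⁻ x, (‖Df k (g i j) x‖₊ : ℝ≥0∞) ^ (2:ℝ))
        (fun _ _ => zero_le) (Finset.mem_univ 1)) ?_
      exact term_le_sum9 (fun i j => ∑ k, ∫⁻ x, (‖Df k (g i j) x‖₊ : ℝ≥0∞) ^ (2:ℝ)) i j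
    have hI2 : (∫⁻ x, (‖Df 2 (g i j) x‖₊ : ℝ≥0∞) ^ (2:ℝ)) ≤ De := by
      have e : (∫⁻ x, (‖Df 2 (g i j) x‖₊ : ℝ≥0∞) ^ (2:ℝ))
          = ∫⁻ x, (‖Df j (Df 2 (u i)) x‖₊ : ℝ≥0∞) ^ (2:ℝ) := by
        refine lintegral_congr fun x => ?_
        rw [hgdef]
        simp only
        rw [Df_comm (u i) 2 j x]
      rw [e]
      exact term_le_sum9 (fun i j => ∫⁻ x, (‖Df j (Df 2 (u i)) x‖₊ : ℝ≥0∞) ^ (2:ℝ)) i j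
    have ebd : (Be * (Be * De)) ^ ((1:ℝ)/4) = Be ^ ((1:ℝ)/2) * De ^ ((1:ℝ)/4) := by
      rw [ENNReal.mul_rpow_of_nonneg _ _ (by norm_num : (0:ℝ) ≤ 1/4),
        ENNReal.mul_rpow_of_nonneg _ _ (by norm_num : (0:ℝ) ≤ 1/4),
        show Be ^ ((1:ℝ)/2) = Be ^ ((1:ℝ)/4) * Be ^ ((1:ℝ)/4) by
          rw [← ENNReal.rpow_add_of_nonneg _ _ (by norm_num) (by norm_num)]; norm_num]
      ring
    calc 8 * ((∫⁻ x, (‖g i j x‖₊ : ℝ≥0∞) ^ (2:ℝ)) ^ ((3:ℝ)/4) *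
        ((∫⁻ x, (‖Df 0 (g i j) x‖₊ : ℝ≥0∞) ^ (2:ℝ)) *
         ((∫⁻ x, (‖Df 1 (g i j) x‖₊ : ℝ≥0∞) ^ (2:ℝ)) *
          (∫⁻ x, (‖Df 2 (g i j) x‖₊ : ℝ≥0∞) ^ (2:ℝ)))) ^ ((1:ℝ)/4))
        ≤ 8 * (Ae ^ ((3:ℝ)/4) * (Be * (Be * De)) ^ ((1:ℝ)/4)) := by
          gcongr
      _ = 8 * K := by rw [ebd, hK]
  -- the master ENNReal inequality
  have master : (∫⁻ x, ENNReal.ofReal ((∑ i : Fin 3, ∑ j : Fin 3, (g i j x) ^ 2) ^ ((3:ℝ)/2)))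
      ≤ 5832 * K := by
    have ptw : ∀ x : E3, ENNReal.ofReal ((∑ i : Fin 3, ∑ j : Fin 3, (g i j x) ^ 2) ^ ((3:ℝ)/2))
        ≤ 81 * ∑ i : Fin 3, ∑ j : Fin 3, (‖g i j x‖₊ : ℝ≥0∞) ^ (3:ℝ) := by
      intro x
      have hreal := pointwise81 (fun p => |g p.1 p.2 x|) (fun p => abs_nonneg _)
      calc ENNReal.ofReal ((∑ i : Fin 3, ∑ j : Fin 3, (g i j x) ^ 2) ^ ((3:ℝ)/2))
          = ENNReal.ofReal ((∑ p : Fin 3 × Fin 3, |g p.1 p.2 x| ^ 2) ^ ((3:ℝ)/2)) := by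
            rw [Fintype.sum_prod_type]
            simp_rw [sq_abs]
        _ ≤ ENNReal.ofReal (81 * ∑ p : Fin 3 × Fin 3, |g p.1 p.2 x| ^ 3) :=
            ENNReal.ofReal_le_ofReal hreal
        _ = 81 * ∑ i : Fin 3, ∑ j : Fin 3, (‖g i j x‖₊ : ℝ≥0∞) ^ (3:ℝ) := by
            rw [ENNReal.ofReal_mul (by norm_num), ENNReal.ofReal_sum_of_nonneg
              (fun p _ => by positivity)]
            simp_rw [ofReal_cube_abs]
            rw [Fintype.sum_prod_type]
            norm_num
    calc (∫⁻ x, ENNReal.ofReal ((∑ i : Fin 3, ∑ j : Fin 3, (g i j x) ^ 2) ^ ((3:ℝ)/2)))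
        ≤ ∫⁻ x, 81 * ∑ i : Fin 3, ∑ j : Fin 3, (‖g i j x‖₊ : ℝ≥0∞) ^ (3:ℝ) :=
          lintegral_mono ptw
      _ = 81 * ∑ i : Fin 3, ∑ j : Fin 3, ∫⁻ x, (‖g i j x‖₊ : ℝ≥0∞) ^ (3:ℝ) := by
          rw [lintegral_const_mul _ (by
            exact Finset.measurable_sum _ fun i _ =>
              Finset.measurable_sum _ fun j _ => mgj (g i j) 3)]
          congr 1
          rw [lintegral_finset_sum _ fun i _ =>
            Finset.measurable_sum _ fun j _ => mgj (g i j) 3]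
          exact Finset.sum_congr rfl fun i _ =>
            lintegral_finset_sum _ fun j _ => mgj (g i j) 3
      _ ≤ 81 * ∑ i : Fin 3, ∑ j : Fin 3, (8 * K) := by
          gcongr with i _ j _
          exact step3 i j
      _ = 5832 * K := by
          simp only [Finset.sum_const, Finset.card_univ, Fintype.card_fin, nsmul_eq_mul]
          ring
  -- conversions to real integrals
  have contg : ∀ i j : Fin 3, Continuous fun x : E3 => (g i j x) ^ 2 :=
    fun i j => (g i j).continuous.pow 2
  have hsum_cont : Continuous fun x : E3 => ∑ i : Fin 3, ∑ j : Fin 3, (g i j x) ^ 2 :=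
    continuous_finset_sum _ fun i _ => continuous_finset_sum _ fun j _ => contg i j
  have hconvL : (∫ x, (∑ i : Fin 3, ∑ j : Fin 3, (g i j x) ^ 2) ^ ((3:ℝ)/2))
      = (∫⁻ x, ENNReal.ofReal ((∑ i : Fin 3, ∑ j : Fin 3, (g i j x) ^ 2) ^ ((3:ℝ)/2))).toReal :=
    integral_eq_toReal (hsum_cont.rpow_const fun x => Or.inr (by norm_num))
      (fun x => by positivity)
  have sum_ofReal : ∀ (F : Fin 3 → Fin 3 → E3 → ℝ) (x : E3),
      ENNReal.ofReal (∑ i : Fin 3, ∑ j : Fin 3, (F i j x) ^ 2)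
        = ∑ i : Fin 3, ∑ j : Fin 3, (‖F i j x‖₊ : ℝ≥0∞) ^ (2:ℝ) := by
    intro F x
    rw [ENNReal.ofReal_sum_of_nonneg (fun i _ => by positivity)]
    refine Finset.sum_congr rfl fun i _ => ?_
    rw [ENNReal.ofReal_sum_of_nonneg (fun j _ => by positivity)]
    exact Finset.sum_congr rfl fun j _ => ofReal_sq _
  have hconvA : (∫ x, ∑ i : Fin 3, ∑ j : Fin 3, (g i j x) ^ 2) = Ae.toReal := by
    rw [integral_eq_toReal hsum_cont (fun x => by positivity)]
    congr 1
    simp_rw [sum_ofReal (fun i j => ⇑(g i j))]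
    rw [lintegral_finset_sum _ fun i _ =>
      Finset.measurable_sum _ fun j _ => mgj (g i j) 2]
    exact Finset.sum_congr rfl fun i _ =>
      lintegral_finset_sum _ fun j _ => mgj (g i j) 2
  have hconvB : (∫ x, ∑ i : Fin 3, ∑ j : Fin 3, ∑ k : Fin 3, (Df k (g i j) x) ^ 2)
      = Be.toReal := by
    rw [integral_eq_toReal (F := fun x => ∑ i : Fin 3, ∑ j : Fin 3, ∑ k : Fin 3, (Df k (g i j) x) ^ 2)
      (continuous_finset_sum _ fun i _ =>
      continuous_finset_sum _ fun j _ => continuous_finset_sum _ fun k _ =>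
        (Df k (g i j)).continuous.pow 2) (fun x => by positivity)]
    congr 1
    have e : ∀ x : E3, ENNReal.ofReal (∑ i : Fin 3, ∑ j : Fin 3, ∑ k : Fin 3,
        (Df k (g i j) x) ^ 2)
        = ∑ i : Fin 3, ∑ j : Fin 3, ∑ k : Fin 3, (‖Df k (g i j) x‖₊ : ℝ≥0∞) ^ (2:ℝ) := by
      intro x
      rw [ENNReal.ofReal_sum_of_nonneg (fun i _ => by positivity)]
      refine Finset.sum_congr rfl fun i _ => ?_
      rw [ENNReal.ofReal_sum_of_nonneg (fun j _ => by positivity)]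
      refine Finset.sum_congr rfl fun j _ => ?_
      rw [ENNReal.ofReal_sum_of_nonneg (fun k _ => by positivity)]
      exact Finset.sum_congr rfl fun k _ => ofReal_sq _
    simp_rw [e]
    rw [lintegral_finset_sum _ fun i _ => Finset.measurable_sum _ fun j _ =>
      Finset.measurable_sum _ fun k _ => mgj (Df k (g i j)) 2]
    refine Finset.sum_congr rfl fun i _ => ?_
    rw [lintegral_finset_sum _ fun j _ =>
      Finset.measurable_sum _ fun k _ => mgj (Df k (g i j)) 2]
    exact Finset.sum_congr rfl fun j _ =>
      lintegral_finset_sum _ fun k _ => mgj (Df k (g i j)) 2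
  have hconvD : (∫ x, ∑ i : Fin 3, ∑ j : Fin 3, (Df j (Df 2 (u i)) x) ^ 2) = De.toReal := by
    rw [integral_eq_toReal (F := fun x => ∑ i : Fin 3, ∑ j : Fin 3, (Df j (Df 2 (u i)) x) ^ 2)
      (continuous_finset_sum _ fun i _ =>
      continuous_finset_sum _ fun j _ => (Df j (Df 2 (u i))).continuous.pow 2)
      (fun x => by positivity)]
    congr 1
    simp_rw [sum_ofReal (fun i j => ⇑(Df j (Df 2 (u i))))]
    rw [lintegral_finset_sum _ fun i _ =>
      Finset.measurable_sum _ fun j _ => mgj (Df j (Df 2 (u i))) 2]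
    exact Finset.sum_congr rfl fun i _ =>
      lintegral_finset_sum _ fun j _ => mgj (Df j (Df 2 (u i))) 2
  -- finiteness
  have hAt : Ae ≠ ⊤ := by
    rw [hAe]
    exact (ENNReal.sum_lt_top.2 fun i _ => ENNReal.sum_lt_top.2 fun j _ =>
      lint_pow_lt_top (g i j) (by norm_num)).ne
  have hBt : Be ≠ ⊤ := by
    rw [hBe]
    exact (ENNReal.sum_lt_top.2 fun i _ => ENNReal.sum_lt_top.2 fun j _ =>
      ENNReal.sum_lt_top.2 fun k _ => lint_pow_lt_top (Df k (g i j)) (by norm_num)).ne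
  have hDt : De ≠ ⊤ := by
    rw [hDe]
    exact (ENNReal.sum_lt_top.2 fun i _ => ENNReal.sum_lt_top.2 fun j _ =>
      lint_pow_lt_top (Df j (Df 2 (u i))) (by norm_num)).ne
  have hKt : (5832 : ℝ≥0∞) * K ≠ ⊤ := by
    rw [hK]
    refine ENNReal.mul_ne_top (by norm_num) (ENNReal.mul_ne_top
      (ENNReal.rpow_ne_top_of_nonneg (by norm_num) hAt)
      (ENNReal.mul_ne_top (ENNReal.rpow_ne_top_of_nonneg (by norm_num) hBt)
        (ENNReal.rpow_ne_top_of_nonneg (by norm_num) hDt)))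
  -- put everything together
  have final := ENNReal.toReal_mono hKt master
  simp only [hpd2, hpdD, hpd]
  rw [hconvL, hconvA, hconvB, hconvD]
  refine final.trans (le_of_eq ?_)
  rw [hK, ENNReal.toReal_mul, ENNReal.toReal_mul, ENNReal.toReal_mul,
    ← ENNReal.toReal_rpow, ← ENNReal.toReal_rpow, ← ENNReal.toReal_rpow]
  norm_num
  ring
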